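/- (Theorem 1) Let n, m be natural numbers with 0 < m < n, let y₁, …, y_n ∈ {0,1} (the indicators of success of the CHSH condition aᵢ ⊕ bᵢ = xᵢ ∧ yᵢ in each round), and let Γ_CHSH be a uniformly random subset of {1, …, n} of size m, with Γ_QPQ its complement of size n − m. Let Y = (1/m) Σ_{i∈Γ_CHSH} yᵢ and Y' = (1/(n−m)) Σ_{i∈Γ_QPQ} yᵢ. Then for any ε_QPQ ∈ (0, 1), with ν = √( ((m + 1) / (2 (1 − m/n) m²)) · ln(1/ε_QPQ) ), one has Pr[ Y' − Y ≥ ν ] ≤ ε_QPQ. In particular, if the fraction of rounds in Γ_CHSH satisfying the CHSH condition equals P − δ for some P, then with probability at least 1 − ε_QPQ the fraction of rounds in Γ_QPQ satisfying the CHSH condition is at most P − δ + ν. -/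

import Mathlib

open scoped Classical
open Finset


lemma hoeffding_core {p : ℝ} (hp0 : 0 ≤ p) (hp1 : p ≤ 1) (u : ℝ) :
    Real.exp (-p * u) * (1 - p + p * Real.exp u) ≤ Real.exp (u ^ 2 / 8) := by
  set q : ℝ → ℝ := fun x => 1 - p + p * Real.exp x with hq
  have hqval : ∀ x, q x = 1 - p + p * Real.exp x := fun x => rfl
  have hqpos : ∀ x, 0 < q x := by
    intro x
    rw [hqval]
    rcases eq_or_lt_of_le hp0 with h | h
    · simp [← h]
    · nlinarith [Real.exp_pos x, mul_pos h (Real.exp_pos x)]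
  set g : ℝ → ℝ := fun x => x ^ 2 / 8 + p * x - Real.log (q x) with hg
  set g' : ℝ → ℝ := fun x => x / 4 + p - p * Real.exp x / q x with hg'
  have hderivq : ∀ x, HasDerivAt q (p * Real.exp x) x := by
    intro x
    exact ((Real.hasDerivAt_exp x).const_mul p).const_add (1 - p)
  have hderivg : ∀ x, HasDerivAt g (g' x) x := by
    intro x
    have h1 : HasDerivAt (fun x : ℝ => x ^ 2 / 8 + p * x) (x / 4 + p) x := by
      have := ((hasDerivAt_pow 2 x).div_const 8).add ((hasDerivAt_id x).const_mul p)
      refine this.congr_deriv ?_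
      simp; ring
    have h2 : HasDerivAt (fun x => Real.log (q x)) (p * Real.exp x / q x) x :=
      (hderivq x).log (ne_of_gt (hqpos x))
    exact h1.sub h2
  have hderivg' : ∀ x, HasDerivAt g'
      (1 / 4 - p * Real.exp x * (1 - p) / (q x) ^ 2) x := by
    intro x
    have h1 : HasDerivAt (fun x : ℝ => x / 4 + p) (1 / 4) x := by
      simpa using ((hasDerivAt_id x).div_const 4).add_const p
    have h2 : HasDerivAt (fun x => p * Real.exp x / q x)
        ((p * Real.exp x * q x - p * Real.exp x * (p * Real.exp x)) / (q x) ^ 2) x :=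
      ((Real.hasDerivAt_exp x).const_mul p).div (hderivq x) (ne_of_gt (hqpos x))
    have := h1.sub h2
    refine this.congr_deriv ?_
    have hqx := ne_of_gt (hqpos x)
    rw [hqval]
    field_simp
    ring
  have hg''nonneg : ∀ x, 0 ≤ 1 / 4 - p * Real.exp x * (1 - p) / (q x) ^ 2 := by
    intro x
    rw [sub_nonneg, div_le_iff₀ (pow_pos (hqpos x) 2), hqval]
    nlinarith [Real.exp_pos x, sq_nonneg (1 - p - p * Real.exp x)]
  have hdiffg : Differentiable ℝ g := fun x => (hderivg x).differentiableAt
  have hg'mono : Monotone g' := by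
    have hdiff : Differentiable ℝ g' := fun x => (hderivg' x).differentiableAt
    apply monotone_of_deriv_nonneg hdiff
    intro x
    rw [(hderivg' x).deriv]
    exact hg''nonneg x
  have hg'0 : g' 0 = 0 := by
    have : q 0 = 1 := by rw [hqval]; simp
    simp [hg', this]
  have hg0 : g 0 = 0 := by
    have : q 0 = 1 := by rw [hqval]; simp
    simp [hg, this]
  have hgnonneg : ∀ x, 0 ≤ g x := by
    intro x
    rcases le_total 0 x with hx | hx
    · have hmono : MonotoneOn g (Set.Ici (0:ℝ)) := by
        apply monotoneOn_of_deriv_nonneg (convex_Ici 0) hdiffg.continuous.continuousOn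
          (fun z _ => (hderivg z).differentiableAt.differentiableWithinAt)
        intro z hz
        rw [(hderivg z).deriv]
        have hz0 : (0:ℝ) ≤ z := le_of_lt (by simpa using hz)
        calc (0:ℝ) = g' 0 := hg'0.symm
          _ ≤ g' z := hg'mono hz0
      have := hmono Set.self_mem_Ici (Set.mem_Ici.mpr hx) hx
      rwa [hg0] at this
    · have hmono : AntitoneOn g (Set.Iic (0:ℝ)) := by
        apply antitoneOn_of_deriv_nonpos (convex_Iic 0) hdiffg.continuous.continuousOn
          (fun z _ => (hderivg z).differentiableAt.differentiableWithinAt)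
        intro z hz
        rw [(hderivg z).deriv]
        have hz0 : z ≤ (0:ℝ) := le_of_lt (by simpa using hz)
        calc g' z ≤ g' 0 := hg'mono hz0
          _ = 0 := hg'0
      have := hmono (Set.mem_Iic.mpr hx) Set.self_mem_Iic hx
      rwa [hg0] at this
  have hkey := hgnonneg u
  have hgu : g u = u ^ 2 / 8 + p * u - Real.log (q u) := rfl
  rw [hgu] at hkey
  have hlog : Real.log (q u) ≤ u ^ 2 / 8 + p * u := by linarith
  have h2 : q u ≤ Real.exp (u ^ 2 / 8 + p * u) := by
    rw [← Real.exp_log (hqpos u)]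
    exact Real.exp_le_exp.mpr hlog
  calc Real.exp (-p * u) * q u ≤ Real.exp (-p * u) * Real.exp (u ^ 2 / 8 + p * u) :=
        mul_le_mul_of_nonneg_left h2 (le_of_lt (Real.exp_pos _))
    _ = Real.exp (u ^ 2 / 8) := by rw [← Real.exp_add]; ring_nf



lemma hoeffding_two_point (N₀ N₁ a b t : ℝ) (h0 : 0 ≤ N₀) (h1 : 0 ≤ N₁)
    (hpos : 0 < N₀ + N₁) (hmean : N₀ * a + N₁ * b = 0) (hab : a < b) :
    N₀ * Real.exp (t * a) + N₁ * Real.exp (t * b)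
      ≤ (N₀ + N₁) * Real.exp (t ^ 2 * (b - a) ^ 2 / 8) := by
  set p : ℝ := N₁ / (N₀ + N₁) with hp
  have hp0 : 0 ≤ p := div_nonneg h1 (le_of_lt hpos)
  have hp1 : p ≤ 1 := by
    rw [hp, div_le_one hpos]; linarith
  have hNe : N₀ + N₁ ≠ 0 := ne_of_gt hpos
  have ha : a = -p * (b - a) := by
    rw [hp, show -(N₁ / (N₀ + N₁)) * (b - a) = (-(N₁ * (b - a))) / (N₀ + N₁) by ring, eq_div_iff hNe]
    linear_combination hmean
  set u : ℝ := t * (b - a) with hu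
  have hta : t * a = -p * u := by rw [hu]; linear_combination t * ha
  have htb : t * b = -p * u + u := by rw [hu]; linear_combination t * ha
  have key := hoeffding_core hp0 hp1 u
  have expand : N₀ * Real.exp (t * a) + N₁ * Real.exp (t * b)
      = (N₀ + N₁) * (Real.exp (-p * u) * (1 - p + p * Real.exp u)) := by
    rw [hta, htb, Real.exp_add]
    have h1p : 1 - p = N₀ / (N₀ + N₁) := by rw [eq_div_iff hNe, hp, sub_mul, div_mul_cancel₀ _ hNe]; ring
    rw [h1p, hp]
    field_simp
  rw [expand]
  have hu2 : u ^ 2 / 8 = t ^ 2 * (b - a) ^ 2 / 8 := by rw [hu]; ring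
  rw [← hu2]
  exact mul_le_mul_of_nonneg_left key (le_of_lt hpos)

lemma sum_exp_le {ι : Type*} [DecidableEq ι] (s : Finset ι) (d : ι → ℝ) (a b t : ℝ)
    (hab : a < b) (hd : ∀ x ∈ s, d x = a ∨ d x = b) (hmean : ∑ x ∈ s, d x = 0) :
    ∑ x ∈ s, Real.exp (t * d x)
      ≤ (s.card : ℝ) * Real.exp (t ^ 2 * (b - a) ^ 2 / 8) := by
  classical
  rcases s.eq_empty_or_nonempty with rfl | hne
  · simp
  set s₀ := s.filter (fun x => d x = a) with hs₀
  set s₁ := s.filter (fun x => ¬ d x = a) with hs₁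
  have hd1 : ∀ x ∈ s₁, d x = b := by
    intro x hx
    rw [hs₁, Finset.mem_filter] at hx
    rcases hd x hx.1 with h | h
    · exact absurd h hx.2
    · exact h
  have hcard : (s₀.card : ℝ) + (s₁.card : ℝ) = s.card := by
    rw [hs₀, hs₁]
    exact_mod_cast congrArg Nat.cast (Finset.card_filter_add_card_filter_not
      (p := fun x => d x = a))
  have hsplit : ∀ f : ι → ℝ, ∑ x ∈ s, f x = ∑ x ∈ s₀, f x + ∑ x ∈ s₁, f x := by
    intro f
    rw [hs₀, hs₁]
    exact (Finset.sum_filter_add_sum_filter_not s _ f).symm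
  have hs₀sum : ∀ f : ℝ → ℝ, ∑ x ∈ s₀, f (d x) = s₀.card * f a := by
    intro f
    have h1 : ∑ x ∈ s₀, f (d x) = ∑ _x ∈ s₀, f a :=
      Finset.sum_congr rfl (fun x hx => by
        rw [hs₀, Finset.mem_filter] at hx; rw [hx.2])
    rw [h1, Finset.sum_const, nsmul_eq_mul]
  have hs₁sum : ∀ f : ℝ → ℝ, ∑ x ∈ s₁, f (d x) = s₁.card * f b := by
    intro f
    have h1 : ∑ x ∈ s₁, f (d x) = ∑ _x ∈ s₁, f b :=
      Finset.sum_congr rfl (fun x hx => by rw [hd1 x hx])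
    rw [h1, Finset.sum_const, nsmul_eq_mul]
  have hmean' : (s₀.card : ℝ) * a + (s₁.card : ℝ) * b = 0 := by
    have h2 := hsplit d
    rw [hmean, hs₀sum (fun z => z), hs₁sum (fun z => z)] at h2
    linarith
  have hpos : (0:ℝ) < (s₀.card : ℝ) + (s₁.card : ℝ) := by
    rw [hcard]
    exact_mod_cast Finset.card_pos.mpr hne
  have key := hoeffding_two_point (s₀.card) (s₁.card) a b t (by positivity) (by positivity)
    hpos hmean' hab
  calc ∑ x ∈ s, Real.exp (t * d x)
      = ∑ x ∈ s₀, Real.exp (t * d x) + ∑ x ∈ s₁, Real.exp (t * d x) := hsplit _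
    _ = (s₀.card : ℝ) * Real.exp (t * a) + (s₁.card : ℝ) * Real.exp (t * b) := by
        rw [hs₀sum (fun z => Real.exp (t * z)), hs₁sum (fun z => Real.exp (t * z))]
    _ ≤ ((s₀.card : ℝ) + s₁.card) * Real.exp (t ^ 2 * (b - a) ^ 2 / 8) := key
    _ = (s.card : ℝ) * Real.exp (t ^ 2 * (b - a) ^ 2 / 8) := by rw [hcard]

lemma sum_powersetCard_succ {α : Type*} [Fintype α] [DecidableEq α] (k : ℕ)
    (g : Finset α → ℝ) :
    ((k : ℝ) + 1) * ∑ B ∈ Finset.powersetCard (k + 1) (Finset.univ : Finset α), g B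
      = ∑ A ∈ Finset.powersetCard k (Finset.univ : Finset α), ∑ x ∈ Aᶜ, g (insert x A) := by
  have lhs : ((k : ℝ) + 1) * ∑ B ∈ Finset.powersetCard (k + 1) (univ : Finset α), g B
      = ∑ B ∈ Finset.powersetCard (k + 1) (univ : Finset α), ∑ _x ∈ B, g B := by
    rw [Finset.mul_sum]
    refine Finset.sum_congr rfl (fun B hB => ?_)
    rw [Finset.mem_powersetCard] at hB
    rw [Finset.sum_const, hB.2, nsmul_eq_mul]
    push_cast
    ring
  rw [lhs, Finset.sum_sigma', Finset.sum_sigma']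
  refine Finset.sum_nbij' (fun z => ⟨z.1.erase z.2, z.2⟩) (fun z => ⟨insert z.2 z.1, z.2⟩)
    ?_ ?_ ?_ ?_ ?_
  · rintro ⟨B, x⟩ hz
    rw [Finset.mem_sigma] at hz
    obtain ⟨hB, hx⟩ := hz
    rw [Finset.mem_powersetCard] at hB
    rw [Finset.mem_sigma, Finset.mem_powersetCard]
    refine ⟨⟨Finset.subset_univ _, ?_⟩, ?_⟩
    · rw [Finset.card_erase_of_mem hx, hB.2]
      omega
    · simp
  · rintro ⟨A, x⟩ hz
    rw [Finset.mem_sigma] at hz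
    obtain ⟨hA, hx⟩ := hz
    rw [Finset.mem_powersetCard] at hA
    rw [Finset.mem_compl] at hx
    rw [Finset.mem_sigma, Finset.mem_powersetCard]
    exact ⟨⟨Finset.subset_univ _, by rw [Finset.card_insert_of_notMem hx, hA.2]⟩,
      Finset.mem_insert_self _ _⟩
  · rintro ⟨B, x⟩ hz
    rw [Finset.mem_sigma] at hz
    simp only
    congr 1
    exact Finset.insert_erase hz.2
  · rintro ⟨A, x⟩ hz
    rw [Finset.mem_sigma] at hz
    have hx : x ∉ A := Finset.mem_compl.mp hz.2
    simp only
    congr 1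
    exact Finset.erase_insert hx
  · rintro ⟨B, x⟩ hz
    rw [Finset.mem_sigma] at hz
    simp only
    rw [Finset.insert_erase hz.2]



noncomputable def Zf (n : ℕ) (y : Fin n → ℝ) (A : Finset (Fin n)) : ℝ :=
  ((∑ i ∈ A, y i) - A.card * ((∑ i, y i) / n)) / (n - A.card)

lemma step_bound (n : ℕ) (y : Fin n → ℝ) (hy : ∀ i, y i = 0 ∨ y i = 1)
    (A : Finset (Fin n)) (k : ℕ) (hA : A.card = k) (hk : k + 2 ≤ n) (h : ℝ) :
    ∑ x ∈ Aᶜ, Real.exp (h * Zf n y (insert x A))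
      ≤ ((n : ℝ) - k) * Real.exp (h * Zf n y A)
        * Real.exp (h ^ 2 * (1 / ((n : ℝ) - k - 1)) ^ 2 / 8) := by
  classical
  have hn0 : (0:ℝ) < n := by
    have : 0 < n := by omega
    exact_mod_cast this
  have hnne : (n:ℝ) ≠ 0 := ne_of_gt hn0
  have hkn : (k : ℝ) + 2 ≤ n := by exact_mod_cast hk
  have hcpos : (0:ℝ) < (n : ℝ) - k - 1 := by linarith
  have hcne : (n : ℝ) - k - 1 ≠ 0 := ne_of_gt hcpos
  have hnk : (0:ℝ) < (n : ℝ) - k := by linarith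
  have hnkne : (n : ℝ) - k ≠ 0 := ne_of_gt hnk
  set w : ℝ := (∑ i ∈ A, y i) - ((k:ℝ) + 1) * ((∑ i, y i) / n)
      - ((n : ℝ) - k - 1) * Zf n y A with hw
  have hZins : ∀ x ∉ A, Zf n y (insert x A)
      = ((y x + ∑ i ∈ A, y i) - ((k:ℝ) + 1) * ((∑ i, y i) / n)) / ((n : ℝ) - k - 1) := by
    intro x hxA
    rw [Zf, Finset.sum_insert hxA, Finset.card_insert_of_notMem hxA, hA]
    push_cast
    ring_nf
  have hins : ∀ x ∈ Aᶜ, Zf n y (insert x A)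
      = Zf n y A + (y x + w) / ((n : ℝ) - k - 1) := by
    intro x hx
    have hxA : x ∉ A := Finset.mem_compl.mp hx
    rw [hZins x hxA, hw]
    field_simp
    ring
  have hmean : ∑ x ∈ Aᶜ, (y x + w) / ((n : ℝ) - k - 1) = 0 := by
    have hsumy : ∑ x ∈ Aᶜ, y x = (∑ i, y i) - (∑ i ∈ A, y i) := by
      have := Finset.sum_add_sum_compl A y
      linarith
    have hcardc : ((Aᶜ.card : ℕ) : ℝ) = (n : ℝ) - k := by
      have hk' : k ≤ n := by omega
      rw [Finset.card_compl, hA, Fintype.card_fin, Nat.cast_sub hk']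
    have hsplit : ∑ x ∈ Aᶜ, (y x + w) / ((n : ℝ) - k - 1)
        = ((∑ x ∈ Aᶜ, y x) + (Aᶜ.card : ℝ) * w) / ((n : ℝ) - k - 1) := by
      rw [← Finset.sum_div, Finset.sum_add_distrib, Finset.sum_const, nsmul_eq_mul]
    rw [hsplit, hsumy, hcardc, div_eq_zero_iff]
    left
    rw [hw, Zf, hA]
    field_simp
    ring
  have hdvals : ∀ x ∈ Aᶜ, (y x + w) / ((n : ℝ) - k - 1) = w / ((n : ℝ) - k - 1)
      ∨ (y x + w) / ((n : ℝ) - k - 1) = (1 + w) / ((n : ℝ) - k - 1) := by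
    intro x _
    rcases hy x with h0 | h1
    · left; rw [h0]; ring_nf
    · right; rw [h1]
  have hab : w / ((n : ℝ) - k - 1) < (1 + w) / ((n : ℝ) - k - 1) := by
    rw [div_lt_div_iff₀ hcpos hcpos]
    nlinarith
  have key := sum_exp_le Aᶜ (fun x => (y x + w) / ((n : ℝ) - k - 1))
    (w / ((n : ℝ) - k - 1)) ((1 + w) / ((n : ℝ) - k - 1)) h hab hdvals hmean
  have hdiff : (1 + w) / ((n : ℝ) - k - 1) - w / ((n : ℝ) - k - 1)
      = 1 / ((n : ℝ) - k - 1) := by field_simp; ring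
  rw [hdiff] at key
  have hcardc : ((Aᶜ.card : ℕ) : ℝ) = (n : ℝ) - k := by
    have hk' : k ≤ n := by omega
    rw [Finset.card_compl, hA, Fintype.card_fin, Nat.cast_sub hk']
  calc ∑ x ∈ Aᶜ, Real.exp (h * Zf n y (insert x A))
      = ∑ x ∈ Aᶜ, Real.exp (h * Zf n y A)
          * Real.exp (h * ((y x + w) / ((n : ℝ) - k - 1))) := by
        refine Finset.sum_congr rfl (fun x hx => ?_)
        rw [← Real.exp_add, hins x hx]
        ring_nf
    _ = Real.exp (h * Zf n y A)
          * ∑ x ∈ Aᶜ, Real.exp (h * ((y x + w) / ((n : ℝ) - k - 1))) := by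
        rw [Finset.mul_sum]
    _ ≤ Real.exp (h * Zf n y A)
          * ((Aᶜ.card : ℝ) * Real.exp (h ^ 2 * (1 / ((n : ℝ) - k - 1)) ^ 2 / 8)) := by
        exact mul_le_mul_of_nonneg_left key (le_of_lt (Real.exp_pos _))
    _ = ((n : ℝ) - k) * Real.exp (h * Zf n y A)
          * Real.exp (h ^ 2 * (1 / ((n : ℝ) - k - 1)) ^ 2 / 8) := by
        rw [hcardc]; ring






lemma chain_bound (n m : ℕ) (hm : 0 < m) (hmn : m < n) (y : Fin n → ℝ)
    (hy : ∀ i, y i = 0 ∨ y i = 1) (h : ℝ) :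
    ∀ j, j ≤ n - m →
      ∑ B ∈ Finset.powersetCard j (Finset.univ : Finset (Fin n)), Real.exp (h * Zf n y B)
        ≤ (n.choose j : ℝ)
          * Real.exp (h ^ 2 * (∑ k ∈ Finset.range j, (1 / ((n : ℝ) - k - 1)) ^ 2) / 8) := by
  intro j
  induction j with
  | zero =>
    intro _
    rw [Finset.powersetCard_zero]
    simp [Zf]
  | succ j ih =>
    intro hj
    have hj' : j ≤ n - m := by omega
    have hjn : j + 2 ≤ n := by omega
    have ihb := ih hj'
    set Ej : ℝ := Real.exp (h ^ 2 * (1 / ((n : ℝ) - j - 1)) ^ 2 / 8) with hEj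
    set Vj : ℝ := ∑ k ∈ Finset.range j, (1 / ((n : ℝ) - k - 1)) ^ 2 with hVj
    have hjpos : (0:ℝ) < (j:ℝ) + 1 := by positivity
    have key : ((j:ℝ) + 1)
        * ∑ B ∈ Finset.powersetCard (j + 1) (Finset.univ : Finset (Fin n)),
            Real.exp (h * Zf n y B)
        ≤ ((n:ℝ) - j) * Ej * ((n.choose j : ℝ) * Real.exp (h ^ 2 * Vj / 8)) := by
      rw [sum_powersetCard_succ j (fun B => Real.exp (h * Zf n y B))]
      calc ∑ A ∈ Finset.powersetCard j (Finset.univ : Finset (Fin n)),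
            ∑ x ∈ Aᶜ, Real.exp (h * Zf n y (insert x A))
          ≤ ∑ A ∈ Finset.powersetCard j (Finset.univ : Finset (Fin n)),
              ((n:ℝ) - j) * Real.exp (h * Zf n y A) * Ej := by
            refine Finset.sum_le_sum (fun A hA => ?_)
            rw [Finset.mem_powersetCard] at hA
            exact step_bound n y hy A j hA.2 hjn h
        _ = ((n:ℝ) - j) * Ej
              * ∑ A ∈ Finset.powersetCard j (Finset.univ : Finset (Fin n)),
                  Real.exp (h * Zf n y A) := by
            rw [Finset.mul_sum]
            exact Finset.sum_congr rfl (fun A _ => by ring)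
        _ ≤ ((n:ℝ) - j) * Ej * ((n.choose j : ℝ) * Real.exp (h ^ 2 * Vj / 8)) := by
            have hpos : (0:ℝ) ≤ ((n:ℝ) - j) * Ej := by
              have : (j:ℝ) + 2 ≤ n := by exact_mod_cast hjn
              have h1 : (0:ℝ) ≤ (n:ℝ) - j := by linarith
              positivity
            exact mul_le_mul_of_nonneg_left ihb hpos
    have hchoose : ((n:ℝ) - j) * (n.choose j : ℝ) = ((j:ℝ) + 1) * (n.choose (j+1) : ℝ) := by
      have := Nat.choose_succ_right_eq n j
      have hcast : (n.choose (j+1) : ℝ) * ((j:ℝ) + 1) = (n.choose j : ℝ) * ((n:ℝ) - j) := by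
        have hjn' : j ≤ n := by omega
        rw [← Nat.cast_sub hjn']
        exact_mod_cast congrArg (Nat.cast : ℕ → ℝ) this
      linarith [hcast]
    have hexp : Ej * Real.exp (h ^ 2 * Vj / 8)
        = Real.exp (h ^ 2 * (∑ k ∈ Finset.range (j+1), (1 / ((n : ℝ) - k - 1)) ^ 2) / 8) := by
      rw [hEj, ← Real.exp_add, Finset.sum_range_succ, ← hVj]
      congr 1
      push_cast
      ring
    have final : ((j:ℝ) + 1)
        * ∑ B ∈ Finset.powersetCard (j + 1) (Finset.univ : Finset (Fin n)),
            Real.exp (h * Zf n y B)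
        ≤ ((j:ℝ) + 1) * ((n.choose (j+1) : ℝ)
            * Real.exp (h ^ 2 * (∑ k ∈ Finset.range (j+1), (1 / ((n : ℝ) - k - 1)) ^ 2) / 8)) := by
      calc ((j:ℝ) + 1) * _ ≤ ((n:ℝ) - j) * Ej * ((n.choose j : ℝ) * Real.exp (h ^ 2 * Vj / 8)) := key
        _ = (((n:ℝ) - j) * (n.choose j : ℝ)) * (Ej * Real.exp (h ^ 2 * Vj / 8)) := by ring
        _ = ((j:ℝ) + 1) * ((n.choose (j+1) : ℝ)
            * Real.exp (h ^ 2 * (∑ k ∈ Finset.range (j+1), (1 / ((n : ℝ) - k - 1)) ^ 2) / 8)) := by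
            rw [hchoose, hexp]; ring
    exact le_of_mul_le_mul_left final hjpos

lemma Vsum_le : ∀ (c a : ℕ), 1 ≤ a →
    ∑ k ∈ Finset.range c, (1 / ((a:ℝ) + k)) ^ 2
      ≤ (c : ℝ) * ((a:ℝ) + 1) / ((((a:ℝ) + c)) * (a:ℝ) ^ 2) := by
  intro c
  induction c with
  | zero => intro a _; simp
  | succ c ih =>
    intro a ha
    have ha' : (1:ℝ) ≤ (a:ℝ) := by exact_mod_cast ha
    have hapos : (0:ℝ) < a := by linarith
    have hacpos : (0:ℝ) < (a:ℝ) + c := by positivity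
    have hac1pos : (0:ℝ) < (a:ℝ) + c + 1 := by positivity
    rw [Finset.sum_range_succ]
    have ihb := ih a ha
    have keystep : (c : ℝ) * ((a:ℝ) + 1) / ((((a:ℝ) + c)) * (a:ℝ) ^ 2)
        + (1 / ((a:ℝ) + c)) ^ 2
        ≤ ((c : ℝ) + 1) * ((a:ℝ) + 1) / ((((a:ℝ) + c + 1)) * (a:ℝ) ^ 2) := by
      rw [div_pow, one_pow, div_add_div _ _ (by positivity) (by positivity),
        div_le_div_iff₀ (by positivity) (by positivity)]
      nlinarith [mul_pos hapos hacpos, sq_nonneg ((a:ℝ) + c),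
        mul_nonneg (mul_nonneg (le_of_lt hapos) (Nat.cast_nonneg c)) (sq_nonneg ((a:ℝ)+c)),
        mul_pos (mul_pos hapos hapos) (mul_pos hacpos hacpos)]
    calc ∑ k ∈ Finset.range c, (1 / ((a:ℝ) + k)) ^ 2 + (1 / ((a:ℝ) + c)) ^ 2
        ≤ (c : ℝ) * ((a:ℝ) + 1) / ((((a:ℝ) + c)) * (a:ℝ) ^ 2) + (1 / ((a:ℝ) + c)) ^ 2 := by
          linarith
      _ ≤ ((c : ℝ) + 1) * ((a:ℝ) + 1) / ((((a:ℝ) + c + 1)) * (a:ℝ) ^ 2) := keystep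
      _ = (((c:ℕ)+1 : ℕ) : ℝ) * ((a:ℝ) + 1) / ((((a:ℝ) + ((c:ℕ)+1:ℕ))) * (a:ℝ) ^ 2) := by
          push_cast; ring_nf







lemma count_eq (n m : ℕ) (p : Finset (Fin n) → Prop) :
    (Finset.univ.filter (fun Γ : {s : Finset (Fin n) // s.card = m} => p Γ.1)).card
      = ((Finset.powersetCard m (Finset.univ : Finset (Fin n))).filter p).card := by
  apply Finset.card_bij (fun Γ _ => Γ.1)
  · intro Γ hΓ
    rw [Finset.mem_filter] at hΓ ⊢
    exact ⟨Finset.mem_powersetCard.mpr ⟨Finset.subset_univ _, Γ.2⟩, hΓ.2⟩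
  · intro a _ b _ hab
    exact Subtype.ext hab
  · intro B hB
    rw [Finset.mem_filter, Finset.mem_powersetCard] at hB
    exact ⟨⟨B, hB.1.2⟩, Finset.mem_filter.mpr ⟨Finset.mem_univ _, hB.2⟩, rfl⟩

lemma compl_count (n m : ℕ) (hmn : m ≤ n) (p : Finset (Fin n) → Prop) :
    ((Finset.powersetCard m (Finset.univ : Finset (Fin n))).filter p).card
      = ((Finset.powersetCard (n - m) (Finset.univ : Finset (Fin n))).filter
          (fun B => p Bᶜ)).card := by
  apply Finset.card_bij (fun A _ => Aᶜ)
  · intro A hA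
    rw [Finset.mem_filter, Finset.mem_powersetCard] at hA
    rw [Finset.mem_filter, Finset.mem_powersetCard, compl_compl]
    refine ⟨⟨Finset.subset_univ _, ?_⟩, hA.2⟩
    rw [Finset.card_compl, Fintype.card_fin, hA.1.2]
  · intro a _ b _ hab
    exact compl_injective hab
  · intro B hB
    rw [Finset.mem_filter, Finset.mem_powersetCard] at hB
    refine ⟨Bᶜ, Finset.mem_filter.mpr ⟨Finset.mem_powersetCard.mpr
      ⟨Finset.subset_univ _, ?_⟩, hB.2⟩, compl_compl B⟩
    rw [Finset.card_compl, Fintype.card_fin, hB.1.2]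
    omega

set_option maxHeartbeats 2000000 in
/-- Theorem 1 of the paper: `y₁, …, yₙ ∈ {0,1}` are the indicators of success of the
CHSH condition in each round; `Γ_CHSH` is a uniformly random size-`m` subset of the
rounds and `Γ_QPQ` its complement; `Y` and `Y'` are the success fractions over
`Γ_CHSH` and `Γ_QPQ`.  Then `Pr[Y' − Y ≥ ν] ≤ ε_QPQ` for
`ν = √(((m + 1) / (2 (1 − m/n) m²)) ln (1/ε_QPQ))`; in particular, if `Y = P − δ`
then with probability at least `1 − ε_QPQ` one has `Y' ≤ P − δ + ν`. -/
theorem stmt_13 (n m : ℕ) (hm : 0 < m) (hmn : m < n)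
    (y : Fin n → ℝ) (hy : ∀ i, y i = 0 ∨ y i = 1)
    (εQPQ : ℝ) (hε : εQPQ ∈ Set.Ioo (0 : ℝ) 1)
    (ν : ℝ)
    (hν : ν = Real.sqrt ((((m : ℝ) + 1) / (2 * (1 - (m : ℝ) / n) * m ^ 2)) *
      Real.log (1 / εQPQ))) :
    (((Finset.univ.filter
        (fun Γ : {s : Finset (Fin n) // s.card = m} =>
          (1 / ((n : ℝ) - m)) * ∑ i ∈ Γ.1ᶜ, y i - (1 / m) * ∑ i ∈ Γ.1, y i ≥ ν)).card : ℝ) /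
      ((Finset.univ : Finset {s : Finset (Fin n) // s.card = m}).card : ℝ)
      ≤ εQPQ) ∧
    ∀ P δ : ℝ,
      (((Finset.univ.filter
          (fun Γ : {s : Finset (Fin n) // s.card = m} =>
            (1 / m) * ∑ i ∈ Γ.1, y i = P - δ →
              (1 / ((n : ℝ) - m)) * ∑ i ∈ Γ.1ᶜ, y i ≤ P - δ + ν)).card : ℝ) /
        ((Finset.univ : Finset {s : Finset (Fin n) // s.card = m}).card : ℝ)
        ≥ 1 - εQPQ) := by
  obtain ⟨hε0, hε1⟩ := hε
  have hmn' : m ≤ n := le_of_lt hmn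
  have hn0 : (0:ℝ) < n := by exact_mod_cast (by omega : 0 < n)
  have hnne : (n:ℝ) ≠ 0 := ne_of_gt hn0
  have hm0 : (0:ℝ) < m := by exact_mod_cast hm
  have hmne : (m:ℝ) ≠ 0 := ne_of_gt hm0
  have hmncast : (m:ℝ) < n := by exact_mod_cast hmn
  have hnm0 : (0:ℝ) < (n:ℝ) - m := by linarith
  have hnmne : (n:ℝ) - m ≠ 0 := ne_of_gt hnm0
  set m' : ℕ := n - m with hm'
  have hm'cast : (m' : ℝ) = (n:ℝ) - m := by
    rw [hm', Nat.cast_sub hmn']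
  have hm'pos : 0 < m' := by omega
  -- log quantity
  set L : ℝ := Real.log (1 / εQPQ) with hLdef
  have hL : 0 < L := by
    apply Real.log_pos
    rw [lt_div_iff₀ hε0]
    linarith
  -- nu basics
  have hm1 : (1:ℝ) ≤ m := by exact_mod_cast hm
  have hargpos : 0 < (((m : ℝ) + 1) / (2 * (1 - (m : ℝ) / n) * m ^ 2)) * L := by
    have h1 : (m:ℝ)/n < 1 := (div_lt_one hn0).mpr hmncast
    have h1' : (0:ℝ) < 1 - (m:ℝ)/n := by linarith
    have h2 : 0 < 2 * (1 - (m : ℝ) / n) * m ^ 2 := by positivity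
    positivity
  have harg : 0 ≤ (((m : ℝ) + 1) / (2 * (1 - (m : ℝ) / n) * m ^ 2)) * L :=
    le_of_lt hargpos
  have hνpos : 0 < ν := by rw [hν]; exact Real.sqrt_pos.mpr hargpos
  have hν2 : ν ^ 2 = (((m : ℝ) + 1) / (2 * (1 - (m : ℝ) / n) * m ^ 2)) * L := by
    rw [hν, Real.sq_sqrt harg]
  -- lambda, V
  set lam : ℝ := ((m' : ℝ) * ν) / n with hlamdef
  have hlampos : 0 < lam := by
    rw [hlamdef, hm'cast]
    positivity
  set V : ℝ := ∑ k ∈ Finset.range m', (1 / ((n : ℝ) - k - 1)) ^ 2 with hVdef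
  have hterm : ∀ k ∈ Finset.range m', (0:ℝ) < (1 / ((n : ℝ) - k - 1)) ^ 2 := by
    intro k hk
    rw [Finset.mem_range] at hk
    have hk1 : (k:ℝ) < m' := by exact_mod_cast hk
    have hm1' : (1:ℝ) ≤ m := by exact_mod_cast hm
    have : (0:ℝ) < (n:ℝ) - k - 1 := by rw [hm'cast] at hk1; linarith
    positivity
  have hVpos : 0 < V := by
    rw [hVdef]
    exact Finset.sum_pos hterm (Finset.nonempty_range_iff.mpr (by omega))
  set Vmax : ℝ := (m' : ℝ) * ((m:ℝ) + 1) / ((n:ℝ) * (m:ℝ) ^ 2) with hVmaxdef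
  have hVle : V ≤ Vmax := by
    have hreflect := Finset.sum_range_reflect (fun k => (1 / ((m:ℝ) + k)) ^ 2) m'
    have hVeq : V = ∑ k ∈ Finset.range m', (1 / ((m:ℝ) + k)) ^ 2 := by
      rw [hVdef, ← hreflect]
      refine Finset.sum_congr rfl (fun j hj => ?_)
      rw [Finset.mem_range] at hj
      have hcast : ((m:ℝ) + ((m' - 1 - j : ℕ) : ℝ)) = (n:ℝ) - j - 1 := by
        have h1 : m + (m' - 1 - j) = n - (1 + j) := by omega
        have h2 : ((m + (m' - 1 - j) : ℕ) : ℝ) = (m:ℝ) + ((m' - 1 - j : ℕ) : ℝ) := by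
          push_cast; ring
        rw [← h2, h1, Nat.cast_sub (by omega)]
        push_cast; ring
      rw [hcast]
    rw [hVeq]
    have := Vsum_le m' m hm
    have hmm' : (m:ℝ) + m' = n := by rw [hm'cast]; ring
    rw [hmm'] at this
    rw [hVmaxdef]
    convert this using 2
  have h2lam : 2 * lam ^ 2 = Vmax * L := by
    rw [hlamdef, hVmaxdef, hm'cast]
    rw [div_pow, mul_pow]
    rw [hν2]
    have h1mn : 1 - (m:ℝ)/n = ((n:ℝ) - m)/n := by field_simp
    rw [h1mn]
    field_simp
  -- the exponent parameter
  set h : ℝ := 4 * lam / V with hhdef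
  have hhpos : 0 < h := by rw [hhdef]; positivity
  -- Chernoff-type bound on the count over (n-m)-subsets
  have hchain := chain_bound n m hm hmn y hy h m' (le_refl _)
  rw [← hVdef] at hchain
  -- Markov
  set Pm' := Finset.powersetCard m' (Finset.univ : Finset (Fin n)) with hPm'
  set bad := Pm'.filter (fun B => lam ≤ Zf n y B) with hbad
  have hmarkov : (bad.card : ℝ) * Real.exp (h * lam)
      ≤ ∑ B ∈ Pm', Real.exp (h * Zf n y B) := by
    calc (bad.card : ℝ) * Real.exp (h * lam)
        = ∑ _B ∈ bad, Real.exp (h * lam) := by rw [Finset.sum_const, nsmul_eq_mul]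
      _ ≤ ∑ B ∈ bad, Real.exp (h * Zf n y B) := by
          refine Finset.sum_le_sum (fun B hB => ?_)
          rw [hbad, Finset.mem_filter] at hB
          exact Real.exp_le_exp.mpr (mul_le_mul_of_nonneg_left hB.2 (le_of_lt hhpos))
      _ ≤ ∑ B ∈ Pm', Real.exp (h * Zf n y B) := by
          refine Finset.sum_le_sum_of_subset_of_nonneg (Finset.filter_subset _ _)
            (fun B _ _ => le_of_lt (Real.exp_pos _))
  have hexpo : h ^ 2 * V / 8 - h * lam = -(2 * lam ^ 2 / V) := by
    rw [hhdef]
    field_simp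
    ring
  have hexpo_le : -(2 * lam ^ 2 / V) ≤ Real.log εQPQ := by
    have hVL : V * L ≤ 2 * lam ^ 2 := by
      rw [h2lam]
      exact mul_le_mul_of_nonneg_right hVle (le_of_lt hL)
    have hLle : L ≤ 2 * lam ^ 2 / V := (le_div_iff₀ hVpos).mpr (by linarith)
    have hLlog : L = - Real.log εQPQ := by
      rw [hLdef, one_div, Real.log_inv]
    linarith
  have hcount : (bad.card : ℝ) ≤ εQPQ * (n.choose m' : ℝ) := by
    have e1 : (bad.card : ℝ) = (bad.card : ℝ) * Real.exp (h * lam) * Real.exp (-(h * lam)) := by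
      rw [mul_assoc, ← Real.exp_add]
      simp
    rw [e1]
    calc (bad.card : ℝ) * Real.exp (h * lam) * Real.exp (-(h * lam))
        ≤ ((n.choose m' : ℝ) * Real.exp (h ^ 2 * V / 8)) * Real.exp (-(h * lam)) := by
          refine mul_le_mul_of_nonneg_right (le_trans hmarkov hchain) (le_of_lt (Real.exp_pos _))
      _ = (n.choose m' : ℝ) * Real.exp (h ^ 2 * V / 8 - h * lam) := by
          rw [mul_assoc, ← Real.exp_add]
          ring_nf
      _ ≤ (n.choose m' : ℝ) * εQPQ := by
          refine mul_le_mul_of_nonneg_left ?_ (Nat.cast_nonneg _)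
          rw [hexpo]
          calc Real.exp (-(2 * lam ^ 2 / V)) ≤ Real.exp (Real.log εQPQ) :=
                Real.exp_le_exp.mpr hexpo_le
            _ = εQPQ := Real.exp_log hε0
      _ = εQPQ * (n.choose m' : ℝ) := by ring
  -- identification of the two counts
  set C := (Finset.univ : Finset {s : Finset (Fin n) // s.card = m}).card with hCdef
  have hCval : C = n.choose m := by
    rw [hCdef]
    have := count_eq n m (fun _ => True)
    simp only [Finset.filter_true] at this
    rw [this, Finset.card_powersetCard, Finset.card_univ, Fintype.card_fin]
  have hCpos : 0 < C := by rw [hCval]; exact Nat.choose_pos hmn'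
  have hCRpos : (0:ℝ) < C := by exact_mod_cast hCpos
  have hchoose_symm : n.choose m' = n.choose m := Nat.choose_symm hmn'
  -- event equivalence
  have hiff : ∀ B ∈ Pm',
      ((1 / ((n : ℝ) - m)) * ∑ i ∈ Bᶜᶜ, y i - (1 / m) * ∑ i ∈ Bᶜ, y i ≥ ν
        ↔ lam ≤ Zf n y B) := by
    intro B hB
    rw [hPm', Finset.mem_powersetCard] at hB
    have hBcard : ((B.card : ℕ) : ℝ) = (n:ℝ) - m := by rw [hB.2, hm'cast]
    have hTc : ∑ i ∈ Bᶜ, y i = (∑ i, y i) - ∑ i ∈ B, y i := by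
      have := Finset.sum_add_sum_compl B y
      linarith
    have hZ : Zf n y B = ((∑ i ∈ B, y i) - ((n:ℝ) - m) * ((∑ i, y i) / n)) / m := by
      rw [Zf, hBcard]
      have : (n:ℝ) - ((n:ℝ) - m) = m := by ring
      rw [this]
    have hq : (0:ℝ) < (n:ℝ) / ((n:ℝ) - m) := by positivity
    have hYZ : (1 / ((n : ℝ) - m)) * ∑ i ∈ Bᶜᶜ, y i - (1 / m) * ∑ i ∈ Bᶜ, y i
        = Zf n y B * ((n:ℝ) / ((n:ℝ) - m)) := by
      rw [compl_compl, hTc, hZ]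
      field_simp
      ring
    rw [ge_iff_le, hYZ]
    have hlam_eq : lam = ν / ((n:ℝ) / ((n:ℝ) - m)) := by
      rw [hlamdef, hm'cast, div_div_eq_mul_div]
      ring
    rw [hlam_eq, div_le_iff₀ hq]
  -- first conjunct
  have main1 : ((Finset.univ.filter
      (fun Γ : {s : Finset (Fin n) // s.card = m} =>
        (1 / ((n : ℝ) - m)) * ∑ i ∈ Γ.1ᶜ, y i - (1 / m) * ∑ i ∈ Γ.1, y i ≥ ν)).card : ℝ) / (C:ℝ)
      ≤ εQPQ := by
    have e1 := count_eq n m (fun s =>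
      (1 / ((n : ℝ) - m)) * ∑ i ∈ sᶜ, y i - (1 / m) * ∑ i ∈ s, y i ≥ ν)
    have e2 := compl_count n m hmn' (fun s =>
      (1 / ((n : ℝ) - m)) * ∑ i ∈ sᶜ, y i - (1 / m) * ∑ i ∈ s, y i ≥ ν)
    have e3 : (Finset.powersetCard (n - m) (Finset.univ : Finset (Fin n))).filter
        (fun B => (1 / ((n : ℝ) - m)) * ∑ i ∈ Bᶜᶜ, y i - (1 / m) * ∑ i ∈ Bᶜ, y i ≥ ν)
        = bad := by
      rw [hbad]
      exact Finset.filter_congr hiff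
    rw [div_le_iff₀ hCRpos]
    have : (Finset.univ.filter
        (fun Γ : {s : Finset (Fin n) // s.card = m} =>
          (1 / ((n : ℝ) - m)) * ∑ i ∈ Γ.1ᶜ, y i - (1 / m) * ∑ i ∈ Γ.1, y i ≥ ν)).card
        = bad.card := by
      rw [e1, e2, ← e3]
    rw [this]
    calc (bad.card : ℝ) ≤ εQPQ * (n.choose m' : ℝ) := hcount
      _ = εQPQ * C := by rw [hchoose_symm, ← hCval]
  refine ⟨main1, ?_⟩
  -- second conjunct
  intro P δ
  set p₂ := fun Γ : {s : Finset (Fin n) // s.card = m} =>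
    (1 / m) * ∑ i ∈ Γ.1, y i = P - δ →
      (1 / ((n : ℝ) - m)) * ∑ i ∈ Γ.1ᶜ, y i ≤ P - δ + ν with hp₂
  set p₁ := fun Γ : {s : Finset (Fin n) // s.card = m} =>
    (1 / ((n : ℝ) - m)) * ∑ i ∈ Γ.1ᶜ, y i - (1 / m) * ∑ i ∈ Γ.1, y i ≥ ν with hp₁
  have hsub : Finset.univ.filter (fun Γ => ¬ p₂ Γ) ⊆ Finset.univ.filter p₁ := by
    refine Finset.monotone_filter_right _ ?_
    intro Γ _ hΓ
    simp only [hp₂] at hΓ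
    push_neg at hΓ
    show (1 / ((n : ℝ) - m)) * ∑ i ∈ (Γ.1)ᶜ, y i - (1 / m) * ∑ i ∈ Γ.1, y i ≥ ν
    have h1 := hΓ.1
    have h2 := hΓ.2
    rw [ge_iff_le]
    linarith
  have hcard2 : (Finset.univ.filter p₂).card + (Finset.univ.filter (fun Γ => ¬ p₂ Γ)).card
      = C := by
    rw [hCdef]
    exact Finset.card_filter_add_card_filter_not (p := p₂)
  have h1C : ((Finset.univ.filter p₁).card : ℝ) ≤ εQPQ * C := by
    have := main1
    rw [div_le_iff₀ hCRpos] at this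
    exact this
  have hnegC : ((Finset.univ.filter (fun Γ => ¬ p₂ Γ)).card : ℝ) ≤ εQPQ * C := by
    calc ((Finset.univ.filter (fun Γ => ¬ p₂ Γ)).card : ℝ)
        ≤ ((Finset.univ.filter p₁).card : ℝ) := by exact_mod_cast Finset.card_le_card hsub
      _ ≤ εQPQ * C := h1C
  have hfinal : (1 - εQPQ) * C ≤ ((Finset.univ.filter p₂).card : ℝ) := by
    have : ((Finset.univ.filter p₂).card : ℝ)
        = (C:ℝ) - ((Finset.univ.filter (fun Γ => ¬ p₂ Γ)).card : ℝ) := by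
      have := hcard2
      have hcast : ((Finset.univ.filter p₂).card : ℝ)
          + ((Finset.univ.filter (fun Γ => ¬ p₂ Γ)).card : ℝ) = C := by exact_mod_cast this
      linarith
    rw [this]
    linarith
  rw [ge_iff_le, le_div_iff₀ hCRpos]
  linarith
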